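/- With f the alternating form associated to the nondegenerate skew hermitian form h on the free A-module V, for every i ≥ 1 one has r^{2i-1} V = V(m^i), where V(m^i) = {v ∈ V : f(v,V) ⊆ m^i}, r = Aπ, and m = Rp. In particular each r^j V is invariant under the symplectic group Sp(V,f). -/

import Mathlib

open Polynomial

noncomputable section

variable (R : Type) [CommRing R] [IsLocalRing R] [IsPrincipalIdealRing R] [Finite R]
variable (p : R) (ℓ q : ℕ)

/-- The ramified extension `A = R[X]/(X² - p, X^{2ℓ-1})`. -/
abbrev Aext : Type :=
  Polynomial R ⧸ Ideal.span ({X ^ 2 - C p, X ^ (2 * ℓ - 1)} : Set (Polynomial R))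

/-- The image `π` of `X` in `A`. -/
def piA : Aext R p ℓ :=
  Ideal.Quotient.mk (Ideal.span ({X ^ 2 - C p, X ^ (2 * ℓ - 1)} : Set (Polynomial R))) X

section AuxPoly

variable {R : Type} [CommRing R]


lemma dvd1 (p : R) (ℓ : ℕ) (hℓ : 1 ≤ ℓ) :
    (X ^ 2 - C p) ∣ (X ^ (2 * ℓ - 1) - C (p ^ (ℓ - 1)) * X : R[X]) := by
  have h2 : 2 * ℓ - 1 = 2 * (ℓ - 1) + 1 := by omega
  have : (X ^ (2 * ℓ - 1) - C (p ^ (ℓ - 1)) * X : R[X])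
      = ((X ^ 2) ^ (ℓ - 1) - (C p) ^ (ℓ - 1)) * X := by
    rw [h2, pow_succ, ← pow_mul, map_pow]; ring
  rw [this]
  exact Dvd.dvd.mul_right (sub_dvd_pow_sub_pow _ _ _) X

lemma mem_iff [Nontrivial R] (p : R) (ℓ : ℕ) (hℓ : 1 ≤ ℓ) (hp : p ^ ℓ = 0) (r₀ r₁ : R) :
    (C r₀ + C r₁ * X ∈ Ideal.span ({X ^ 2 - C p, X ^ (2 * ℓ - 1)} : Set R[X])) ↔
      r₀ = 0 ∧ ∃ s, r₁ = p ^ (ℓ - 1) * s := by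
  have hg : (X ^ 2 - C p : R[X]).Monic := monic_X_pow_sub_C p (by norm_num)
  have hdeg : (X ^ 2 - C p : R[X]).degree = 2 := degree_X_pow_sub_C (by norm_num) p
  have hgmem : (X ^ 2 - C p : R[X]) ∈ Ideal.span ({X ^ 2 - C p, X ^ (2 * ℓ - 1)} : Set R[X]) :=
    Ideal.subset_span (Set.mem_insert _ _)
  have hXmem : (X ^ (2 * ℓ - 1) : R[X]) ∈ Ideal.span ({X ^ 2 - C p, X ^ (2 * ℓ - 1)} : Set R[X]) :=
    Ideal.subset_span (Set.mem_insert_of_mem _ rfl)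
  constructor
  · intro hmem
    rw [Ideal.mem_span_pair] at hmem
    obtain ⟨a, c, hac⟩ := hmem
    obtain ⟨d, hd⟩ := dvd1 p ℓ hℓ
    set g : R[X] := X ^ 2 - C p with hgdef
    have hc : c %ₘ g + g * (c /ₘ g) = c := modByMonic_add_div c g
    have hcdeg : (c %ₘ g).degree ≤ 1 := by
      have := degree_modByMonic_lt c hg
      rw [hdeg] at this
      exact Order.le_of_lt_succ (by exact_mod_cast this)
    set s : R := (c %ₘ g).coeff 0 with hsdef
    set t : R := (c %ₘ g).coeff 1 with htdef
    have hcm : c = C t * X + C s + g * (c /ₘ g) := by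
      conv_lhs => rw [← hc, eq_X_add_C_of_degree_le_one hcdeg]
    have h1 : (X : R[X]) ^ (2 * ℓ - 1) = C (p ^ (ℓ - 1)) * X + g * d := by
      rw [← hd]; ring
    have e0 : (C t * C (p ^ (ℓ - 1)) * C p : R[X]) = 0 := by
      rw [← C_mul, ← C_mul]
      have hplp : p ^ (ℓ - 1) * p = 0 := by
        rw [← pow_succ]
        have : ℓ - 1 + 1 = ℓ := by omega
        rw [this, hp]
      rw [show t * p ^ (ℓ - 1) * p = t * (p ^ (ℓ - 1) * p) by ring, hplp, mul_zero, C_0]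
    set Q : R[X] := a + (c /ₘ g) * (C (p ^ (ℓ - 1)) * X + g * d) + (C s + C t * X) * d
        + C t * C (p ^ (ℓ - 1)) with hQdef
    have key : C r₀ + (C r₁ - C (p ^ (ℓ - 1)) * C s) * X = g * Q := by
      rw [hQdef]
      linear_combination (-1 : R[X]) * hac + X ^ (2 * ℓ - 1) * hcm
        + (C t * X + C s + g * (c /ₘ g)) * h1 + e0
    have hQ0 : Q = 0 := by
      by_contra hQ
      have hdegw : (C r₀ + (C r₁ - C (p ^ (ℓ - 1)) * C s) * X).degree ≤ 1 := by
        refine le_trans (degree_add_le _ _) (max_le (le_trans degree_C_le (by norm_num)) ?_)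
        refine le_trans (degree_mul_le _ _) ?_
        rw [degree_X]
        have : (C r₁ - C (p ^ (ℓ - 1)) * C s : R[X]).degree ≤ 0 := by
          rw [← C_mul, ← C_sub]; exact degree_C_le
        calc (C r₁ - C (p ^ (ℓ - 1)) * C s : R[X]).degree + 1 ≤ 0 + 1 :=
              add_le_add_left this 1
          _ = 1 := by norm_num
      rw [key] at hdegw
      have hdmul : (g * Q).degree = Q.degree + 2 := by
        rw [mul_comm, hg.degree_mul, hdeg]
      have h0le : (0 : WithBot ℕ) ≤ Q.degree := zero_le_degree_iff.mpr hQ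
      have : (2 : WithBot ℕ) ≤ (g * Q).degree := by
        rw [hdmul]
        calc (2 : WithBot ℕ) = 0 + 2 := by norm_num
          _ ≤ Q.degree + 2 := add_le_add_left h0le 2
      have : (2 : WithBot ℕ) ≤ 1 := le_trans this hdegw
      norm_num at this
    rw [hQ0, mul_zero] at key
    have key' : C r₀ + C (r₁ - p ^ (ℓ - 1) * s) * X = (0 : R[X]) := by
      rw [C_sub, C_mul]; exact key
    have hco0 : r₀ = 0 := by
      have := congrArg (fun q : R[X] => q.coeff 0) key'
      simpa using this
    have hco1 : r₁ - p ^ (ℓ - 1) * s = 0 := by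
      have := congrArg (fun q : R[X] => q.coeff 1) key'
      simp only [coeff_add, coeff_C_mul, coeff_X_one, mul_one, coeff_C, coeff_zero] at this
      simpa using this
    exact ⟨hco0, s, eq_of_sub_eq_zero hco1⟩
  · rintro ⟨h0, s, hs⟩
    subst h0 hs
    obtain ⟨d, hd⟩ := dvd1 p ℓ hℓ
    have hkey : (C (p ^ (ℓ - 1) * s) * X : R[X])
        = C s * (X ^ (2 * ℓ - 1)) - C s * d * (X ^ 2 - C p) := by
      have h1 : (C (p ^ (ℓ - 1)) * X : R[X]) = X ^ (2 * ℓ - 1) - (X ^ 2 - C p) * d := by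
        rw [← hd]; ring
      rw [C_mul]
      calc C (p ^ (ℓ-1)) * C s * X = C s * (C (p ^ (ℓ - 1)) * X) := by ring
        _ = C s * (X ^ (2 * ℓ - 1) - (X ^ 2 - C p) * d) := by rw [h1]
        _ = _ := by ring
    rw [C_0, zero_add, hkey]
    exact Ideal.sub_mem _ (Ideal.mul_mem_left _ _ hXmem) (Ideal.mul_mem_left _ _ hgmem)

end AuxPoly

section AuxA


variable {R : Type} [CommRing R] {p : R} {ℓ : ℕ}

lemma algebraMap_Aext (r : R) :
    algebraMap R (Aext R p ℓ) r =
      Ideal.Quotient.mk (Ideal.span ({X ^ 2 - C p, X ^ (2 * ℓ - 1)} : Set (Polynomial R)))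
        (C r) := by
  rfl

lemma pi_sq : (piA R p ℓ) ^ 2 = algebraMap R (Aext R p ℓ) p := by
  rw [algebraMap_Aext, piA, ← map_pow, ← sub_eq_zero, ← map_sub,
    Ideal.Quotient.eq_zero_iff_mem]
  exact Ideal.subset_span (Set.mem_insert _ _)

lemma pi_pow_top : (piA R p ℓ) ^ (2 * ℓ - 1) = 0 := by
  rw [piA, ← map_pow, Ideal.Quotient.eq_zero_iff_mem]
  exact Ideal.subset_span (Set.mem_insert_of_mem _ rfl)

lemma repr_Aext [Nontrivial R] (a : Aext R p ℓ) :
    ∃ x y : R, a = algebraMap R (Aext R p ℓ) x + algebraMap R (Aext R p ℓ) y * piA R p ℓ := by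
  obtain ⟨f, rfl⟩ := Ideal.Quotient.mk_surjective a
  have hg : (X ^ 2 - C p : R[X]).Monic := monic_X_pow_sub_C p (by norm_num)
  have hdeg : (X ^ 2 - C p : R[X]).degree = 2 := degree_X_pow_sub_C (by norm_num) p
  set g : R[X] := X ^ 2 - C p with hgdef
  refine ⟨(f %ₘ g).coeff 0, (f %ₘ g).coeff 1, ?_⟩
  have hcdeg : (f %ₘ g).degree ≤ 1 := by
    have := degree_modByMonic_lt f hg
    rw [hdeg] at this
    exact Order.le_of_lt_succ (by exact_mod_cast this)
  have hfm : f = C ((f %ₘ g).coeff 1) * X + C ((f %ₘ g).coeff 0) + g * (f /ₘ g) := by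
    conv_lhs => rw [← modByMonic_add_div f g, eq_X_add_C_of_degree_le_one hcdeg]
  rw [algebraMap_Aext, algebraMap_Aext, piA, ← map_mul, ← map_add]
  conv_lhs => rw [hfm]
  rw [← sub_eq_zero, ← map_sub, Ideal.Quotient.eq_zero_iff_mem]
  have : (C ((f %ₘ g).coeff 1) * X + C ((f %ₘ g).coeff 0) + g * (f /ₘ g)
      - (C ((f %ₘ g).coeff 0) + C ((f %ₘ g).coeff 1) * X)) = g * (f /ₘ g) := by ring
  rw [this]
  exact Ideal.mul_mem_right _ _ (Ideal.subset_span (Set.mem_insert _ _))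

lemma zero_iff_Aext [Nontrivial R] (hℓ : 1 ≤ ℓ) (hp : p ^ ℓ = 0) (x y : R) :
    algebraMap R (Aext R p ℓ) x + algebraMap R (Aext R p ℓ) y * piA R p ℓ = 0 ↔
      x = 0 ∧ ∃ s, y = p ^ (ℓ - 1) * s := by
  rw [algebraMap_Aext, algebraMap_Aext, piA, ← map_mul, ← map_add,
    Ideal.Quotient.eq_zero_iff_mem]
  exact mem_iff p ℓ hℓ hp x y

end AuxA

set_option maxHeartbeats 1000000 in
theorem stmt8
    (hℓ : 1 ≤ ℓ)
    (hmax : IsLocalRing.maximalIdeal R = Ideal.span {p})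
    (hnil : Ideal.span {p} ^ ℓ = (⊥ : Ideal R))
    (hnil' : Ideal.span {p} ^ (ℓ - 1) ≠ (⊥ : Ideal R))
    (hq : Nat.card (IsLocalRing.ResidueField R) = q)
    (hodd : Odd q)
    (σ : Aext R p ℓ →ₐ[R] Aext R p ℓ)
    (hσ : σ (piA R p ℓ) = - piA R p ℓ)
    (V : Type) [AddCommGroup V] [Module (Aext R p ℓ) V] [Module R V]
    [IsScalarTower R (Aext R p ℓ) V]
    (n : ℕ) (hn : 1 ≤ n)
    (b : Module.Basis (Fin n ⊕ Fin n) (Aext R p ℓ) V)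
    (h : V → V → Aext R p ℓ)
    (hadd : ∀ v v' w : V, h (v + v') w = h v w + h v' w)
    (hs1 : ∀ (a : Aext R p ℓ) (v w : V), h (a • v) w = σ a * h v w)
    (hs2 : ∀ (a : Aext R p ℓ) (v w : V), h v (a • w) = a * h v w)
    (hsk : ∀ v w : V, h w v = - σ (h v w))
    (hb1 : ∀ i j, h (b (Sum.inl i)) (b (Sum.inr j)) = if i = j then 1 else 0)
    (hb2 : ∀ i j, h (b (Sum.inl i)) (b (Sum.inl j)) = 0)
    (hb3 : ∀ i j, h (b (Sum.inr i)) (b (Sum.inr j)) = 0)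
    (f : V → V → R)
    (hf : ∀ v w : V, algebraMap R (Aext R p ℓ) (2 * f v w) = h v w + σ (h v w))
    :
    (∀ i : ℕ, 1 ≤ i → ∀ v : V,
      v ∈ (Ideal.span {piA R p ℓ} ^ (2 * i - 1) • (⊤ : Submodule (Aext R p ℓ) V) :
        Submodule (Aext R p ℓ) V) ↔
      ∀ w : V, f v w ∈ Ideal.span {p} ^ i) ∧
    (∀ j : ℕ, ∀ g : V ≃ₗ[R] V, (∀ x y : V, f (g x) (g y) = f x y) →
      ∀ v : V,
        v ∈ (Ideal.span {piA R p ℓ} ^ j • (⊤ : Submodule (Aext R p ℓ) V) :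
          Submodule (Aext R p ℓ) V) →
        g v ∈ (Ideal.span {piA R p ℓ} ^ j • (⊤ : Submodule (Aext R p ℓ) V) :
          Submodule (Aext R p ℓ) V)) := by
  classical
  have hp0 : p ^ ℓ = 0 := by
    have : p ^ ℓ ∈ Ideal.span {p} ^ ℓ := by
      rw [Ideal.span_singleton_pow]; exact Ideal.mem_span_singleton_self _
    rw [hnil] at this; exact Ideal.mem_bot.mp this
  have h2u : IsUnit (2 : R) := by
    by_contra h2
    have h2m : (2 : R) ∈ IsLocalRing.maximalIdeal R := h2
    have hfin : Finite (IsLocalRing.ResidueField R) :=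
      Finite.of_surjective _ Ideal.Quotient.mk_surjective
    have hfty : Fintype (IsLocalRing.ResidueField R) := Fintype.ofFinite _
    have h2k : ((2 : ℕ) : IsLocalRing.ResidueField R) = 0 := by
      have : IsLocalRing.residue R 2 = 0 := Ideal.Quotient.eq_zero_iff_mem.mpr h2m
      rw [Nat.cast_ofNat, ← map_ofNat (IsLocalRing.residue R) 2]; exact this
    have hdvd : ringChar (IsLocalRing.ResidueField R) ∣ 2 := ringChar.dvd h2k
    have hchar : ringChar (IsLocalRing.ResidueField R) = 2 := by
      rcases (Nat.prime_two).eq_one_or_self_of_dvd _ hdvd with h1 | h1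
      · exact absurd h1 (CharP.ringChar_ne_one)
      · exact h1
    have := FiniteField.even_card_iff_char_two.mp hchar
    rw [← Nat.card_eq_fintype_card, hq] at this
    obtain ⟨m, hm⟩ := hodd
    omega
  -- cancellation helpers
  have hcan : ∀ a c : R, 2 * a = 2 * c → a = c := fun a c hac => h2u.mul_left_cancel hac
  have hhalf : ∀ (J : Ideal R) (r : R), 2 * r ∈ J → r ∈ J := by
    intro J r hr
    obtain ⟨u, hu⟩ := h2u
    have : r = ↑u⁻¹ * (2 * r) := by rw [← hu, ← mul_assoc, Units.inv_mul, one_mul]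
    rw [this]
    exact Ideal.mul_mem_left _ _ hr
  have annp : ∀ z : R, p * z = 0 → ∃ s, z = p ^ (ℓ - 1) * s := by
    intro z hz
    by_cases hz0 : z = 0
    · exact ⟨0, by rw [hz0, mul_zero]⟩
    have hex : ∃ k, z ∉ Ideal.span {p} ^ (k + 1) := by
      refine ⟨ℓ - 1, ?_⟩
      rw [show ℓ - 1 + 1 = ℓ by omega, hnil]
      simpa using hz0
    set k := Nat.find hex with hkdef
    have hk1 : z ∉ Ideal.span {p} ^ (k + 1) := Nat.find_spec hex
    have hkmem : z ∈ Ideal.span {p} ^ k := by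
      rcases Nat.eq_zero_or_pos k with h0 | h0
      · rw [h0, pow_zero, Ideal.one_eq_top]; exact Submodule.mem_top
      · have hmin := Nat.find_min hex (show k - 1 < k by omega)
        rw [show k - 1 + 1 = k by omega] at hmin
        exact not_not.mp hmin
    rw [Ideal.span_singleton_pow, Ideal.mem_span_singleton'] at hkmem
    obtain ⟨w, hw⟩ := hkmem
    have hwu : IsUnit w := by
      by_contra hwu
      have : w ∈ Ideal.span {p} := by rw [← hmax]; exact hwu
      obtain ⟨w', hw'⟩ := Ideal.mem_span_singleton'.mp this
      refine hk1 ?_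
      rw [Ideal.span_singleton_pow, Ideal.mem_span_singleton']
      exact ⟨w', by rw [← hw, ← hw']; ring⟩
    obtain ⟨u, hu⟩ := hwu
    have hpk1 : p ^ (k + 1) = 0 := by
      have h1 : ↑u * p ^ (k + 1) = 0 := by rw [hu]; rw [show w * p ^ (k+1) = p * (w * p ^ k) by ring, hw, hz]
      calc p ^ (k+1) = ↑u⁻¹ * (↑u * p ^ (k+1)) := by rw [← mul_assoc, Units.inv_mul, one_mul]
        _ = 0 := by rw [h1, mul_zero]
    have hkl : ℓ - 1 ≤ k := by
      by_contra hlt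
      push_neg at hlt
      apply hnil'
      have hpl10 : p ^ (ℓ - 1) = 0 := by
        rw [show ℓ - 1 = (k + 1) + (ℓ - 1 - (k + 1)) by omega, pow_add, hpk1, zero_mul]
      rw [Ideal.span_singleton_pow, hpl10]
      exact Ideal.span_singleton_eq_bot.mpr rfl
    refine ⟨p ^ (k - (ℓ - 1)) * w, ?_⟩
    have hsplit : p ^ k = p ^ (ℓ - 1) * p ^ (k - (ℓ - 1)) := by
      rw [← pow_add, show ℓ - 1 + (k - (ℓ - 1)) = k by omega]
    rw [← hw, hsplit]
    ring
  -- injectivity of algebraMap into A and cancellation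
  have injA : ∀ x : R, algebraMap R (Aext R p ℓ) x = 0 → x = 0 := by
    intro x hx
    have h0 : algebraMap R (Aext R p ℓ) x + algebraMap R (Aext R p ℓ) 0 * piA R p ℓ = 0 := by
      rw [map_zero, zero_mul, add_zero]; exact hx
    exact ((zero_iff_Aext hℓ hp0 x 0).mp h0).1
  have canA : ∀ x y : R, algebraMap R (Aext R p ℓ) x = algebraMap R (Aext R p ℓ) y → x = y := by
    intro x y hxy
    have := injA (x - y) (by rw [map_sub, hxy, sub_self])
    exact sub_eq_zero.mp this
  have hpi2 : (piA R p ℓ) ^ 2 = algebraMap R (Aext R p ℓ) p := pi_sq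
  have sigma_xy : ∀ x y : R,
      σ (algebraMap R (Aext R p ℓ) x + algebraMap R (Aext R p ℓ) y * piA R p ℓ)
        = algebraMap R (Aext R p ℓ) x - algebraMap R (Aext R p ℓ) y * piA R p ℓ := by
    intro x y
    rw [map_add, map_mul, σ.commutes, σ.commutes, hσ]
    ring
  have sigma_sq : ∀ a : Aext R p ℓ, σ (σ a) = a := by
    intro a
    obtain ⟨x, y, rfl⟩ := repr_Aext a
    rw [sigma_xy x y, show algebraMap R (Aext R p ℓ) x - algebraMap R (Aext R p ℓ) y * piA R p ℓ
        = algebraMap R (Aext R p ℓ) x + algebraMap R (Aext R p ℓ) (-y) * piA R p ℓ by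
      rw [map_neg]; ring, sigma_xy, map_neg]
    ring
  have hplpi : algebraMap R (Aext R p ℓ) (p ^ (ℓ - 1)) * piA R p ℓ = 0 := by
    rw [map_pow, ← hpi2, ← pow_mul, ← pow_succ, show 2 * (ℓ - 1) + 1 = 2 * ℓ - 1 by omega,
      pi_pow_top]
  -- coordinatewise membership in r^(2i-1)
  have coordmem : ∀ i : ℕ, 1 ≤ i → ∀ x y : R,
      ((algebraMap R (Aext R p ℓ) x + algebraMap R (Aext R p ℓ) y * piA R p ℓ)
          ∈ Ideal.span {piA R p ℓ} ^ (2 * i - 1)) ↔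
        (x ∈ Ideal.span {p} ^ i ∧ p * y ∈ Ideal.span {p} ^ i) := by
    intro i hi x y
    obtain ⟨I, rfl⟩ : ∃ I, i = I + 1 := ⟨i - 1, by omega⟩
    have hpiodd : (piA R p ℓ) ^ (2 * (I + 1) - 1)
        = (algebraMap R (Aext R p ℓ) p) ^ I * piA R p ℓ := by
      rw [show 2 * (I + 1) - 1 = 2 * I + 1 by omega, pow_succ, pow_mul, hpi2]
    simp only [Ideal.span_singleton_pow, Ideal.mem_span_singleton']
    constructor
    · rintro ⟨c, hc⟩
      obtain ⟨s, t, rfl⟩ := repr_Aext c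
      rw [hpiodd] at hc
      have hzero : algebraMap R (Aext R p ℓ) (x - p ^ (I + 1) * t)
          + algebraMap R (Aext R p ℓ) (y - p ^ I * s) * piA R p ℓ = 0 := by
        rw [map_sub, map_sub, map_mul, map_mul, map_pow, map_pow]
        linear_combination (-1 : Aext R p ℓ) * hc
          + algebraMap R (Aext R p ℓ) t * (algebraMap R (Aext R p ℓ) p) ^ I * hpi2
      obtain ⟨h1, s', hs'⟩ := (zero_iff_Aext hℓ hp0 _ _).mp hzero
      have hpl : p * p ^ (ℓ - 1) = 0 := by
        rw [← pow_succ', show ℓ - 1 + 1 = ℓ by omega, hp0]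
      have hy0 : y = p ^ (ℓ - 1) * s' + p ^ I * s := by linear_combination hs'
      constructor
      · exact ⟨t, by rw [eq_of_sub_eq_zero h1]; ring⟩
      · exact ⟨s, by linear_combination -p * hy0 - s' * hpl⟩
    · rintro ⟨⟨a, ha⟩, ⟨w, hwv⟩⟩
      have hpt : p * (y - w * p ^ I) = 0 := by linear_combination (-1 : R) * hwv
      obtain ⟨s', hs'⟩ := annp _ hpt
      refine ⟨algebraMap R (Aext R p ℓ) a * piA R p ℓ + algebraMap R (Aext R p ℓ) w, ?_⟩
      rw [hpiodd]
      have ha' : algebraMap R (Aext R p ℓ) a * (algebraMap R (Aext R p ℓ) p) ^ (I + 1)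
          = algebraMap R (Aext R p ℓ) x := by rw [← map_pow, ← map_mul, ha]
      have hy0 : y = w * p ^ I + p ^ (ℓ - 1) * s' := by linear_combination hs'
      have hy' : algebraMap R (Aext R p ℓ) y
          = algebraMap R (Aext R p ℓ) w * (algebraMap R (Aext R p ℓ) p) ^ I
            + algebraMap R (Aext R p ℓ) (p ^ (ℓ - 1)) * algebraMap R (Aext R p ℓ) s' := by
        rw [hy0, map_add, map_mul, map_mul, map_pow]
      linear_combination algebraMap R (Aext R p ℓ) a * (algebraMap R (Aext R p ℓ) p) ^ I * hpi2
        + ha' - piA R p ℓ * hy' - algebraMap R (Aext R p ℓ) s' * hplpi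
  -- sum criterion for membership in J • ⊤
  have memJ : ∀ (J : Ideal (Aext R p ℓ)) (v : V),
      (∀ c, b.repr v c ∈ J) → v ∈ J • (⊤ : Submodule (Aext R p ℓ) V) := by
    intro J v hv
    rw [← b.sum_repr v]
    exact Submodule.sum_mem _ fun c _ => Submodule.smul_mem_smul (hv c) Submodule.mem_top
  -- additivity helpers for h
  have h0w : ∀ w : V, h 0 w = 0 := by
    intro w
    have h00 := hadd 0 0 w
    rw [add_zero] at h00
    exact (left_eq_add.mp h00)
  have hsum : ∀ (w : V) (F : (Fin n ⊕ Fin n) → V),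
      h (∑ c, F c) w = ∑ c, h (F c) w :=
    fun w F => map_sum (AddMonoidHom.mk' (fun v => h v w) (fun a c => hadd a c w)) F Finset.univ
  -- values of h against basis vectors
  have H1 : ∀ (v : V) (j : Fin n), h v (b (Sum.inr j)) = σ (b.repr v (Sum.inl j)) := by
    intro v j
    conv_lhs => rw [← b.sum_repr v]
    rw [hsum, Fintype.sum_sum_type]
    have e2 : ∀ j' : Fin n, h (b.repr v (Sum.inl j') • b (Sum.inl j')) (b (Sum.inr j))
        = if j' = j then σ (b.repr v (Sum.inl j')) else 0 := by
      intro j'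
      rw [hs1, hb1]
      split_ifs <;> simp only [map_one, map_zero, mul_one, mul_zero, mul_neg, neg_zero, mul_neg_one] <;> try ring
    have e3 : ∀ j' : Fin n, h (b.repr v (Sum.inr j') • b (Sum.inr j')) (b (Sum.inr j)) = 0 := by
      intro j'
      rw [hs1, hb3, mul_zero]
    rw [Finset.sum_congr rfl (fun j' _ => e2 j'), Finset.sum_congr rfl (fun j' _ => e3 j'),
      Finset.sum_const_zero, add_zero, Finset.sum_ite_eq' Finset.univ j,
      if_pos (Finset.mem_univ j)]
  have H2 : ∀ (v : V) (j : Fin n), h v (b (Sum.inl j)) = - σ (b.repr v (Sum.inr j)) := by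
    intro v j
    conv_lhs => rw [← b.sum_repr v]
    rw [hsum, Fintype.sum_sum_type]
    have e2 : ∀ j' : Fin n, h (b.repr v (Sum.inl j') • b (Sum.inl j')) (b (Sum.inl j)) = 0 := by
      intro j'
      rw [hs1, hb2, mul_zero]
    have e3 : ∀ j' : Fin n, h (b.repr v (Sum.inr j') • b (Sum.inr j')) (b (Sum.inl j))
        = if j = j' then - σ (b.repr v (Sum.inr j')) else 0 := by
      intro j'
      rw [hs1, hsk (b (Sum.inl j)) (b (Sum.inr j')), hb1]
      split_ifs <;> simp only [map_one, map_zero, mul_one, mul_zero, mul_neg, neg_zero, mul_neg_one] <;> try ring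
    rw [Finset.sum_congr rfl (fun j' _ => e2 j'), Finset.sum_congr rfl (fun j' _ => e3 j'),
      Finset.sum_const_zero, zero_add, Finset.sum_ite_eq Finset.univ j,
      if_pos (Finset.mem_univ j)]
  -- the key evaluation lemma for f
  have ftest : ∀ (v w : V) (x y : R),
      h v w = algebraMap R (Aext R p ℓ) x + algebraMap R (Aext R p ℓ) y * piA R p ℓ →
        f v w = x := by
    intro v w x y hvw
    apply hcan
    apply canA
    rw [hf v w, hvw, sigma_xy]
    rw [show (2 : R) * x = x + x by ring, map_add]
    ring
  -- forward direction: v ∈ r^(2i-1) V → f v w ∈ m^i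
  have forward : ∀ i : ℕ, 1 ≤ i → ∀ v : V,
      v ∈ (Ideal.span {piA R p ℓ} ^ (2 * i - 1) • (⊤ : Submodule (Aext R p ℓ) V) :
        Submodule (Aext R p ℓ) V) →
      ∀ w : V, f v w ∈ Ideal.span {p} ^ i := by
    intro i hi v hv
    refine Submodule.smul_induction_on hv ?_ ?_
    · intro r hr u _ w
      rw [Ideal.span_singleton_pow, Ideal.mem_span_singleton'] at hr
      obtain ⟨c, rfl⟩ := hr
      obtain ⟨I, hIi⟩ : ∃ I, i = I + 1 := ⟨i - 1, by omega⟩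
      set G := h u w with hG
      have hodd' : Odd (2 * i - 1) := ⟨i - 1, by omega⟩
      have hk : (piA R p ℓ) ^ (2 * i - 1)
          = (algebraMap R (Aext R p ℓ) p) ^ I * piA R p ℓ := by
        rw [hIi, show 2 * (I + 1) - 1 = 2 * I + 1 by omega, pow_succ, pow_mul, hpi2]
      have hnegpow : (σ (piA R p ℓ)) ^ (2 * i - 1) = -((piA R p ℓ) ^ (2 * i - 1)) := by
        rw [hσ]
        exact hodd'.neg_pow (piA R p ℓ)
      have hhval : h ((c * piA R p ℓ ^ (2 * i - 1)) • u) w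
          = - (σ c * (piA R p ℓ) ^ (2 * i - 1) * G) := by
        rw [hs1, map_mul, map_pow, hnegpow]
        ring
      have hσhval : σ (h ((c * piA R p ℓ ^ (2 * i - 1)) • u) w)
          = c * (piA R p ℓ) ^ (2 * i - 1) * σ G := by
        rw [hhval, map_neg, map_mul, map_mul, map_pow, sigma_sq, hnegpow]
        ring
      obtain ⟨x0, y0, hz⟩ := repr_Aext (c * σ G - σ c * G)
      have hσz : σ (c * σ G - σ c * G) = -(c * σ G - σ c * G) := by
        rw [map_sub, map_mul, map_mul, sigma_sq, sigma_sq]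
        ring
      have hx0 : x0 = 0 := by
        have h2x : algebraMap R (Aext R p ℓ) (2 * x0) = 0 := by
          have hthis := hσz
          rw [hz, sigma_xy] at hthis
          rw [show (2 : R) * x0 = x0 + x0 by ring, map_add]
          linear_combination hthis
        exact hcan x0 0 (by rw [mul_zero]; exact injA _ h2x)
      rw [hx0, map_zero, zero_add] at hz
      have key : algebraMap R (Aext R p ℓ) (2 * f ((c * piA R p ℓ ^ (2 * i - 1)) • u) w)
          = algebraMap R (Aext R p ℓ) (p ^ i * y0) := by
        rw [hf, hσhval, hhval, hk, hIi, map_mul, map_pow]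
        linear_combination (algebraMap R (Aext R p ℓ) p) ^ I * piA R p ℓ * hz
          + algebraMap R (Aext R p ℓ) y0 * (algebraMap R (Aext R p ℓ) p) ^ I * hpi2
      have h2f : 2 * f ((c * piA R p ℓ ^ (2 * i - 1)) • u) w = p ^ i * y0 := canA _ _ key
      apply hhalf
      rw [h2f, Ideal.span_singleton_pow, Ideal.mem_span_singleton']
      exact ⟨y0, mul_comm _ _⟩
    · intro v₁ v₂ h1 h2 w
      have e : 2 * f (v₁ + v₂) w = 2 * (f v₁ w + f v₂ w) := by
        apply canA
        rw [hf, hadd, map_add, show (2 : R) * (f v₁ w + f v₂ w)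
            = 2 * f v₁ w + 2 * f v₂ w by ring, map_add, hf, hf]
        ring
      rw [hcan _ _ e]
      exact Ideal.add_mem _ (h1 w) (h2 w)
  -- backward direction
  have backward : ∀ i : ℕ, 1 ≤ i → ∀ v : V,
      (∀ w : V, f v w ∈ Ideal.span {p} ^ i) →
      v ∈ (Ideal.span {piA R p ℓ} ^ (2 * i - 1) • (⊤ : Submodule (Aext R p ℓ) V) :
        Submodule (Aext R p ℓ) V) := by
    intro i hi v hw
    apply memJ
    intro c
    obtain ⟨x, y, hxy⟩ := repr_Aext (b.repr v c)
    rw [hxy]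
    apply (coordmem i hi x y).mpr
    rcases c with j | j
    · -- coordinates of the inl part are tested against inr basis vectors
      have hh : h v (b (Sum.inr j))
          = algebraMap R (Aext R p ℓ) x - algebraMap R (Aext R p ℓ) y * piA R p ℓ := by
        rw [H1 v j, hxy, sigma_xy]
      constructor
      · have hfx : f v (b (Sum.inr j)) = x := by
          apply ftest v _ x (-y)
          rw [hh, map_neg]
          ring
        have hx := hw (b (Sum.inr j))
        rw [hfx] at hx
        exact hx
      · have hh2 : h v (piA R p ℓ • b (Sum.inr j))
            = algebraMap R (Aext R p ℓ) (-(p * y)) + algebraMap R (Aext R p ℓ) x * piA R p ℓ := by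
          rw [hs2, hh, map_neg, map_mul]
          linear_combination (- algebraMap R (Aext R p ℓ) y) * hpi2
        have hfy : f v (piA R p ℓ • b (Sum.inr j)) = -(p * y) := ftest _ _ _ _ hh2
        have hy := hw (piA R p ℓ • b (Sum.inr j))
        rw [hfy] at hy
        have := neg_mem hy
        simpa using this
    · have hh : h v (b (Sum.inl j))
          = algebraMap R (Aext R p ℓ) (-x) + algebraMap R (Aext R p ℓ) y * piA R p ℓ := by
        rw [H2 v j, hxy, sigma_xy, map_neg]
        ring
      constructor
      · have hfx : f v (b (Sum.inl j)) = -x := ftest _ _ _ _ hh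
        have hx := hw (b (Sum.inl j))
        rw [hfx] at hx
        have := neg_mem hx
        simpa using this
      · have hh2 : h v (piA R p ℓ • b (Sum.inl j))
            = algebraMap R (Aext R p ℓ) (p * y) + algebraMap R (Aext R p ℓ) (-x) * piA R p ℓ := by
          rw [hs2, hh, map_neg, map_mul]
          linear_combination algebraMap R (Aext R p ℓ) y * hpi2
        have hfy : f v (piA R p ℓ • b (Sum.inl j)) = p * y := ftest _ _ _ _ hh2
        have hy := hw (piA R p ℓ • b (Sum.inl j))
        rw [hfy] at hy
        exact hy
  -- invariance for even powers
  have even_inv : ∀ (i : ℕ) (g : V ≃ₗ[R] V) (v : V),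
      v ∈ (Ideal.span {piA R p ℓ} ^ (2 * i) • (⊤ : Submodule (Aext R p ℓ) V) :
        Submodule (Aext R p ℓ) V) →
      g v ∈ (Ideal.span {piA R p ℓ} ^ (2 * i) • (⊤ : Submodule (Aext R p ℓ) V) :
        Submodule (Aext R p ℓ) V) := by
    intro i g v hv
    have hπ2i : (piA R p ℓ) ^ (2 * i) = algebraMap R (Aext R p ℓ) (p ^ i) := by
      rw [pow_mul, hpi2, map_pow]
    have hex : ∃ u : V, v = (p ^ i : R) • u := by
      refine Submodule.smul_induction_on hv ?_ ?_
      · intro r hr u _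
        rw [Ideal.span_singleton_pow, Ideal.mem_span_singleton'] at hr
        obtain ⟨c, rfl⟩ := hr
        refine ⟨c • u, ?_⟩
        rw [mul_comm c, mul_smul, hπ2i, algebraMap_smul]
      · rintro v₁ v₂ ⟨u₁, rfl⟩ ⟨u₂, rfl⟩
        exact ⟨u₁ + u₂, by rw [smul_add]⟩
    obtain ⟨u, rfl⟩ := hex
    rw [map_smul]
    have hre : (p ^ i : R) • (g u) = (piA R p ℓ) ^ (2 * i) • (g u) := by
      rw [hπ2i, algebraMap_smul]
    rw [hre]
    exact Submodule.smul_mem_smul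
      (by rw [Ideal.span_singleton_pow]; exact Ideal.mem_span_singleton_self _) Submodule.mem_top
  constructor
  · intro i hi v
    exact ⟨fun hv => forward i hi v hv, fun hw => backward i hi v hw⟩
  · intro j g hg v hv
    rcases Nat.even_or_odd j with he | ho
    · obtain ⟨i, hj⟩ := he
      rw [show j = 2 * i by omega] at hv ⊢
      exact even_inv i g v hv
    · obtain ⟨i, hj⟩ := ho
      rw [show j = 2 * (i + 1) - 1 by omega] at hv ⊢
      apply backward (i + 1) (by omega)
      intro w
      have hfw : f (g v) w = f v (g.symm w) := by
        conv_lhs => rw [show w = g (g.symm w) from (g.apply_symm_apply w).symm]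
        exact hg v (g.symm w)
      rw [hfw]
      exact forward (i + 1) (by omega) v hv (g.symm w)
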